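/- Let n > 1 be an integer and let a, b, c ∈ ℤ² be points with all coordinates in {0, 1, …, n}, with b ≠ c and with a not lying on the line through b and c. Then the Euclidean distance from a to the line through b and c is at least 1/√(2n² − 2n + 1). -/

import Mathlib

/-- Cast an integer grid point in `ℤ²` to a point of the Euclidean plane. -/
def castPtE (p : Fin 2 → ℤ) : EuclideanSpace ℝ (Fin 2) := WithLp.toLp 2 (fun i => (p i : ℝ))

lemma sq_le_pred_sq {x m : ℤ} (hm : 0 < m) (h : x ^ 2 < m ^ 2) : x ^ 2 ≤ (m - 1) ^ 2 := by
  have h1 : x < m := by nlinarith [sq_nonneg (x - m), sq_nonneg (x + m)]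
  have h2 : -m < x := by nlinarith [sq_nonneg (x - m), sq_nonneg (x + m)]
  have h3 : x ≤ m - 1 := by omega
  have h4 : -(m - 1) ≤ x := by omega
  nlinarith [mul_nonneg (by linarith : (0:ℤ) ≤ m - 1 - x) (by linarith : (0:ℤ) ≤ m - 1 + x)]

lemma natAbs_eq_of_sq_eq {x : ℤ} {n : ℕ} (h : x ^ 2 = (n : ℤ) ^ 2) : x.natAbs = n := by
  have : (x - n) * (x + n) = 0 := by ring_nf; linarith [h]
  rcases mul_eq_zero.mp this with h' | h'
  · have : x = (n : ℤ) := by omega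
    simp [this]
  · have : x = -(n : ℤ) := by omega
    simp [this]

set_option maxHeartbeats 1000000 in
theorem gridPoint_line_dist (n : ℕ) (hn : 1 < n) (a b c : Fin 2 → ℤ)
    (ha : ∀ i, 0 ≤ a i ∧ a i ≤ n) (hb : ∀ i, 0 ≤ b i ∧ b i ≤ n)
    (hc : ∀ i, 0 ≤ c i ∧ c i ≤ n) (hbc : b ≠ c)
    (haline : (castPtE a) ∉ (affineSpan ℝ {castPtE b, castPtE c} : Set (EuclideanSpace ℝ (Fin 2)))) :
    1 / Real.sqrt (2 * n ^ 2 - 2 * n + 1) ≤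
      Metric.infDist (castPtE a) (affineSpan ℝ {castPtE b, castPtE c} : Set (EuclideanSpace ℝ (Fin 2))) := by
  have hn' : (1:ℝ) < (n:ℝ) := by exact_mod_cast hn
  have hdne' : c 0 - b 0 ≠ 0 ∨ c 1 - b 1 ≠ 0 := by
    by_contra h
    push_neg at h
    apply hbc
    funext i
    fin_cases i
    · show b 0 = c 0; omega
    · show b 1 = c 1; omega
  set d0 : ℤ := c 0 - b 0 with hd0def
  set d1 : ℤ := c 1 - b 1 with hd1def
  set u0 : ℤ := a 0 - b 0 with hu0def
  set u1 : ℤ := a 1 - b 1 with hu1def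
  have hdne : d0 ≠ 0 ∨ d1 ≠ 0 := hdne' 
  set z : ℤ := u0 * d1 - u1 * d0 with hzdef
  -- cast helper lemmas
  have hz : z ≠ 0 := by
    intro h0
    apply haline
    have key : ∃ r : ℝ, r • (castPtE c -ᵥ castPtE b) = castPtE a -ᵥ castPtE b := by
      have hzz : u0 * d1 = u1 * d0 := by omega
      have hzzr : ((a 0 : ℝ) - b 0) * ((c 1 : ℝ) - b 1) = ((a 1 : ℝ) - b 1) * ((c 0 : ℝ) - b 0) := by
        have : ((u0 * d1 : ℤ) : ℝ) = ((u1 * d0 : ℤ) : ℝ) := by exact_mod_cast hzz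
        push_cast [hu0def, hu1def, hd0def, hd1def] at this
        linarith [this]
      rcases hdne with h | h
      · refine ⟨(u0 : ℝ) / (d0 : ℝ), ?_⟩
        have hd0r : (d0 : ℝ) ≠ 0 := Int.cast_ne_zero.mpr h
        ext i
        fin_cases i
        · show (u0 : ℝ) / (d0 : ℝ) * (castPtE c 0 - castPtE b 0) = castPtE a 0 - castPtE b 0
          simp only [castPtE, PiLp.toLp_apply]
          rw [div_mul_eq_mul_div, div_eq_iff hd0r]
          push_cast [hu0def, hd0def]
          ring
        · show (u0 : ℝ) / (d0 : ℝ) * (castPtE c 1 - castPtE b 1) = castPtE a 1 - castPtE b 1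
          simp only [castPtE, PiLp.toLp_apply]
          rw [div_mul_eq_mul_div, div_eq_iff hd0r]
          push_cast [hu0def, hd0def]
          linear_combination hzzr
      · refine ⟨(u1 : ℝ) / (d1 : ℝ), ?_⟩
        have hd1r : (d1 : ℝ) ≠ 0 := Int.cast_ne_zero.mpr h
        ext i
        fin_cases i
        · show (u1 : ℝ) / (d1 : ℝ) * (castPtE c 0 - castPtE b 0) = castPtE a 0 - castPtE b 0
          simp only [castPtE, PiLp.toLp_apply]
          rw [div_mul_eq_mul_div, div_eq_iff hd1r]
          push_cast [hu1def, hd1def]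
          linear_combination -hzzr
        · show (u1 : ℝ) / (d1 : ℝ) * (castPtE c 1 - castPtE b 1) = castPtE a 1 - castPtE b 1
          simp only [castPtE, PiLp.toLp_apply]
          rw [div_mul_eq_mul_div, div_eq_iff hd1r]
          push_cast [hu1def, hd1def]
          ring
    obtain ⟨r, hr⟩ := key
    have := vadd_left_mem_affineSpan_pair.mpr ⟨r, hr⟩
    rwa [vsub_vadd] at this
  -- gcd facts
  set g : ℕ := Int.gcd d0 d1 with hgdef
  have hgpos : 0 < g := Int.gcd_pos_iff.mpr hdne
  have hgd0 : (g : ℤ) * (d0 / g) = d0 := Int.mul_ediv_cancel' (Int.gcd_dvd_left _ _)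
  have hgd1 : (g : ℤ) * (d1 / g) = d1 := Int.mul_ediv_cancel' (Int.gcd_dvd_right _ _)
  set p : ℤ := d0 / g with hpdef
  set q : ℤ := d1 / g with hqdef
  have hcop : Int.gcd p q = 1 := Int.gcd_div_gcd_div_gcd hgpos
  have hzdvd : (g : ℤ) ∣ z := by
    exact dvd_sub (Dvd.dvd.mul_left (Int.gcd_dvd_right _ _) u0) (Dvd.dvd.mul_left (Int.gcd_dvd_left _ _) u1)
  have hzsq : ((g : ℤ))^2 ≤ z^2 := by
    have h1 : (g : ℤ) ≤ |z| := Int.le_of_dvd (abs_pos.mpr hz) ((dvd_abs _ _).mpr hzdvd)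
    nlinarith [abs_nonneg z, sq_abs z]
  have hg1 : (1 : ℤ) ≤ (g : ℤ) := by exact_mod_cast hgpos
  -- coordinate bounds
  have hd0b : d0 ^ 2 ≤ (n:ℤ)^2 := by
    have h1 := hb 0; have h2 := hc 0
    nlinarith [h1.1, h1.2, h2.1, h2.2]
  have hd1b : d1 ^ 2 ≤ (n:ℤ)^2 := by
    have h1 := hb 1; have h2 := hc 1
    nlinarith [h1.1, h1.2, h2.1, h2.2]
  have hpb : p ^ 2 ≤ (n:ℤ)^2 := by
    have e : (g:ℤ)^2 * p^2 = d0^2 := by rw [← hgd0]; ring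
    nlinarith [e, sq_nonneg p, hd0b, mul_nonneg (by nlinarith : (0:ℤ) ≤ (g:ℤ)^2 - 1) (sq_nonneg p)]
  have hqb : q ^ 2 ≤ (n:ℤ)^2 := by
    have e : (g:ℤ)^2 * q^2 = d1^2 := by rw [← hgd1]; ring
    nlinarith [e, sq_nonneg q, hd1b, mul_nonneg (by nlinarith : (0:ℤ) ≤ (g:ℤ)^2 - 1) (sq_nonneg q)]
  -- key bound on p^2+q^2
  have hkey : p ^ 2 + q ^ 2 ≤ 2 * (n:ℤ)^2 - 2 * n + 1 := by
    have hn1 : (0:ℤ) < (n:ℤ) := by exact_mod_cast Nat.zero_lt_of_lt hn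
    by_cases hpn : p ^ 2 = (n:ℤ)^2
    · by_cases hqn : q ^ 2 = (n:ℤ)^2
      · exfalso
        have hp' : p.natAbs = n := natAbs_eq_of_sq_eq hpn
        have hq' : q.natAbs = n := natAbs_eq_of_sq_eq hqn
        have : Int.gcd p q = n := by rw [Int.gcd, hp', hq', Nat.gcd_self]
        omega
      · have : q ^ 2 ≤ ((n:ℤ) - 1)^2 := sq_le_pred_sq hn1 (lt_of_le_of_ne hqb hqn)
        nlinarith
    · have : p ^ 2 ≤ ((n:ℤ) - 1)^2 := sq_le_pred_sq hn1 (lt_of_le_of_ne hpb hpn)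
      nlinarith
  -- positivity of target
  have hMr0 : (0:ℝ) < 2 * (n:ℝ)^2 - 2 * n + 1 := by nlinarith
  -- reduce to pointwise bound
  have hBmem : castPtE b ∈ (affineSpan ℝ {castPtE b, castPtE c} : Set (EuclideanSpace ℝ (Fin 2))) :=
    left_mem_affineSpan_pair _ _ _
  rw [Metric.infDist_eq_iInf]
  have : Nonempty (affineSpan ℝ {castPtE b, castPtE c} : Set (EuclideanSpace ℝ (Fin 2))) := ⟨⟨_, hBmem⟩⟩
  apply le_ciInf
  rintro ⟨P, hP⟩
  have hP' : (P -ᵥ castPtE b) +ᵥ castPtE b ∈ affineSpan ℝ {castPtE b, castPtE c} := by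
    rwa [vsub_vadd]
  obtain ⟨t, ht⟩ := vadd_left_mem_affineSpan_pair.mp hP'
  have hPeq : P = t • (castPtE c -ᵥ castPtE b) +ᵥ castPtE b := by
    rw [ht, vsub_vadd]
  -- compute distance
  have hdist : dist (castPtE a) P
      = Real.sqrt (((u0:ℝ) - t * d0)^2 + ((u1:ℝ) - t * d1)^2) := by
    rw [hPeq, EuclideanSpace.dist_eq]
    congr 1
    rw [Fin.sum_univ_two]
    simp only [castPtE, PiLp.toLp_apply, Real.dist_eq, sq_abs, vsub_eq_sub, vadd_eq_add, PiLp.add_apply,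
      PiLp.sub_apply, PiLp.smul_apply, smul_eq_mul]
    push_cast [hd0def, hd1def, hu0def, hu1def]
    ring
  rw [hdist, one_div, ← Real.sqrt_inv]
  apply Real.sqrt_le_sqrt
  -- final real inequality
  set S : ℝ := ((u0:ℝ) - t * d0)^2 + ((u1:ℝ) - t * d1)^2 with hSdef
  set Dsq : ℝ := (d0:ℝ)^2 + (d1:ℝ)^2 with hDdef
  have hS0 : (0:ℝ) ≤ S := by positivity
  rw [inv_eq_one_div, div_le_iff₀ hMr0]
  have h1 : ((z:ℝ))^2 ≤ S * Dsq := by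
    have hzr : (z:ℝ) = (u0:ℝ) * d1 - (u1:ℝ) * d0 := by push_cast [hzdef]; ring
    rw [hzr, hSdef, hDdef]
    nlinarith [sq_nonneg (t * ((d0:ℝ)^2 + (d1:ℝ)^2) - ((u0:ℝ) * d0 + (u1:ℝ) * d1))]
  have h2 : ((g:ℝ))^2 ≤ ((z:ℝ))^2 := by exact_mod_cast hzsq
  have h3 : Dsq = ((g:ℝ))^2 * ((p:ℝ)^2 + (q:ℝ)^2) := by
    have e0 : ((g:ℕ):ℝ) * (p:ℝ) = (d0:ℝ) := by exact_mod_cast congrArg (fun x : ℤ => (x : ℝ)) hgd0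
    have e1 : ((g:ℕ):ℝ) * (q:ℝ) = (d1:ℝ) := by exact_mod_cast congrArg (fun x : ℤ => (x : ℝ)) hgd1
    rw [hDdef, ← e0, ← e1]
    ring
  have h4 : (p:ℝ)^2 + (q:ℝ)^2 ≤ 2 * (n:ℝ)^2 - 2 * n + 1 := by exact_mod_cast hkey
  have h5 : (1:ℝ) ≤ (g:ℝ) := by exact_mod_cast hgpos
  have A1 : ((g:ℝ))^2 ≤ S * Dsq := h2.trans h1
  have A2 : Dsq ≤ ((g:ℝ))^2 * (2 * (n:ℝ)^2 - 2 * n + 1) := by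
    rw [h3]
    exact mul_le_mul_of_nonneg_left h4 (by positivity)
  have A3 : S * Dsq ≤ S * (((g:ℝ))^2 * (2 * (n:ℝ)^2 - 2 * n + 1)) :=
    mul_le_mul_of_nonneg_left A2 hS0
  by_contra hcon
  push_neg at hcon
  have hg2 : (0:ℝ) < ((g:ℝ))^2 := by nlinarith
  nlinarith [A1, A3, mul_pos (sub_pos.mpr hcon) hg2]
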